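/- Encoding a block of r_b bits as a number in base 2^{s/2} - 1 and mapping each base-(2^{s/2}-1) digit to a nonzero binary string of length s/2 produces a binary string containing no occurrence of the pattern 10^{s-1}, and uses at most r_b * (1 + 2^{-s/2+1}) bits, for any integers r_b >= 1 and even s >= 4. -/

import Mathlib

set_option maxHeartbeats 1000000


/-- Pattern-avoiding encoding. (i) A binary string of length `L` built from aligned blocks
of length `t = s/2` (with `s = 2*t` even, `t ≥ 2`), each of which is not all-zero,
contains no occurrence of the pattern `10^{s-1}`. (ii) Encoding a block of `r_b ≥ 1` bits
as a number in base `2^{s/2} - 1` uses `⌈r_b / log₂(2^{s/2} - 1)⌉` digits, each mapped to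
`s/2` bits, for a total of at most `r_b * (1 + 2^{-s/2+1}) + s/2` bits. -/
theorem pattern_free_encoding (s t : ℕ) (hs : s = 2 * t) (ht : 2 ≤ t) :
    (∀ (L : ℕ) (f : ℕ → Bool),
      (∀ j : ℕ, (j + 1) * t ≤ L → ∃ i ∈ Finset.Ico (j * t) ((j + 1) * t), f i = true) →
      ¬∃ i : ℕ, i + s ≤ L ∧ f i = true ∧
        ∀ j : ℕ, 1 ≤ j → j < s → f (i + j) = false) ∧
    (∀ r_b : ℕ, 1 ≤ r_b →
      (t : ℝ) * ⌈(r_b : ℝ) / Real.logb 2 ((2 : ℝ) ^ t - 1)⌉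
        ≤ (r_b : ℝ) * (1 + 2 * (2 : ℝ) ^ (-(t : ℤ))) + t) := by
  constructor
  · -- part (i)
    rintro L f hblocks ⟨i, hiL, hfi, hzero⟩
    have hdm := Nat.div_add_mod i t
    have hmod := Nat.mod_lt i (show 0 < t by omega)
    have hexp1 : (i / t + 1 + 1) * t = t * (i / t) + 2 * t := by ring
    have hexp2 : (i / t + 1) * t = t * (i / t) + t := by ring
    have h1 : (i / t + 1 + 1) * t ≤ L := by omega
    obtain ⟨k, hk, hfk⟩ := hblocks (i / t + 1) h1
    rw [Finset.mem_Ico] at hk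
    obtain ⟨hka, hkb⟩ := hk
    have hk1 : i + 1 ≤ k := by omega
    have hk2 : k < i + s := by omega
    have := hzero (k - i) (by omega) (by omega)
    rw [show i + (k - i) = k by omega] at this
    rw [hfk] at this
    exact Bool.noConfusion this
  · -- part (ii)
    intro r hr
    set δ : ℝ := (2 : ℝ) ^ (-(t : ℤ)) with hδdef
    have hδ : δ = ((2 : ℝ) ^ t)⁻¹ := by
      rw [hδdef, zpow_neg, zpow_natCast]
    have hT4 : (4 : ℝ) ≤ (2 : ℝ) ^ t := by
      calc (4 : ℝ) = 2 ^ 2 := by norm_num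
      _ ≤ 2 ^ t := by exact pow_le_pow_right₀ (by norm_num) ht
    have hTpos : (0 : ℝ) < (2 : ℝ) ^ t := by positivity
    have hδpos : 0 < δ := by rw [hδ]; positivity
    have hδ4 : δ ≤ 1 / 4 := by
      rw [hδ, inv_le_comm₀ hTpos (by norm_num)]
      linarith
    have hTδ : (2 : ℝ) ^ t * δ = 1 := by
      rw [hδ]; field_simp
    have hlog2 : (0.6931471803 : ℝ) < Real.log 2 := Real.log_two_gt_d9
    have hT1 : (3 : ℝ) ≤ (2 : ℝ) ^ t - 1 := by linarith
    have hfact : (2 : ℝ) ^ t - 1 = (2 : ℝ) ^ t * (1 - δ) := by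
      rw [mul_sub, hTδ, mul_one]
    have h1δ : (0 : ℝ) < 1 - δ := by linarith
    set l := Real.log (1 - δ) with hldef
    have hlogsplit : Real.log ((2 : ℝ) ^ t - 1) = (t : ℝ) * Real.log 2 + l := by
      rw [hfact, Real.log_mul (ne_of_gt hTpos) (ne_of_gt h1δ), Real.log_pow]
    -- -log(1-δ) ≤ δ/(1-δ)
    have hloginv : Real.log ((1 - δ)⁻¹) ≤ (1 - δ)⁻¹ - 1 :=
      Real.log_le_sub_one_of_pos (by positivity)
    rw [Real.log_inv, ← hldef] at hloginv
    have hl : -l ≤ δ / (1 - δ) := by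
      have hinv : (1 - δ)⁻¹ - 1 = δ / (1 - δ) := by field_simp; ring
      linarith [hinv ▸ hloginv]
    have ht2 : (2 : ℝ) ≤ (t : ℝ) := by exact_mod_cast ht
    have step1 : (1 + 2 * δ) * (-l) ≤ 2 * δ := by
      have h2 : (1 + 2 * δ) * (δ / (1 - δ)) ≤ 2 * δ := by
        rw [mul_div_assoc', div_le_iff₀ h1δ]
        nlinarith [hδ4, hδpos]
      have h3 : (1 + 2 * δ) * (-l) ≤ (1 + 2 * δ) * (δ / (1 - δ)) :=
        mul_le_mul_of_nonneg_left hl (by linarith)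
      linarith
    have htl : (1 : ℝ) ≤ (t : ℝ) * Real.log 2 := by nlinarith
    have step2 : 2 * δ ≤ 2 * δ * ((t : ℝ) * Real.log 2) := by nlinarith [hδpos, htl]
    -- key inequality
    have hkey : (t : ℝ) * Real.log 2 ≤ (1 + 2 * δ) * Real.log ((2 : ℝ) ^ t - 1) := by
      rw [hlogsplit]
      nlinarith [step1, step2]
    have hbpos : 0 < Real.logb 2 ((2 : ℝ) ^ t - 1) :=
      Real.logb_pos (by norm_num) (by linarith)
    set b := Real.logb 2 ((2 : ℝ) ^ t - 1) with hbdef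
    have hlog2pos : (0 : ℝ) < Real.log 2 := by linarith
    have hb : b * Real.log 2 = Real.log ((2 : ℝ) ^ t - 1) := by
      rw [hbdef, Real.logb]; field_simp
    have hkey' : (t : ℝ) ≤ (1 + 2 * δ) * b := by
      rw [← hb] at hkey
      nlinarith [hkey, hlog2pos]
    have hrpos : (1 : ℝ) ≤ (r : ℝ) := by exact_mod_cast hr
    have hceil : ((⌈(r : ℝ) / b⌉ : ℤ) : ℝ) ≤ (r : ℝ) / b + 1 :=
      le_of_lt (Int.ceil_lt_add_one _)
    have htpos : (0 : ℝ) < (t : ℝ) := by linarith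
    calc (t : ℝ) * ⌈(r : ℝ) / b⌉ ≤ (t : ℝ) * ((r : ℝ) / b + 1) :=
          mul_le_mul_of_nonneg_left hceil (le_of_lt htpos)
      _ = (t : ℝ) * ((r : ℝ) / b) + t := by ring
      _ ≤ (r : ℝ) * (1 + 2 * δ) + t := by
          have : (t : ℝ) * ((r : ℝ) / b) ≤ (r : ℝ) * (1 + 2 * δ) := by
            rw [mul_div_assoc', div_le_iff₀ hbpos]
            nlinarith [hkey', hrpos, hδpos, hbpos]
          linarith
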